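/- Let A = A_1 ⊔ A_2 ⊔ A_3 be a (3,3)-net in P^2(C). If two of the three classes each consist of three concurrent lines, then so does the third class. Equivalently, no (3,3)-net has exactly 11 triple points. -/

import Mathlib

open scoped Classical

noncomputable section

/-- The complex projective plane `P²(ℂ)`. -/
abbrev ProjPlane : Type := Projectivization ℂ (Fin 3 → ℂ)

/-- A subset of `P²(ℂ)` is a projective line if it is the zero locus of a nonzero
linear form. -/
def IsProjLine (S : Set ProjPlane) : Prop :=
  ∃ f : (Fin 3 → ℂ) →ₗ[ℂ] ℂ, f ≠ 0 ∧ S = {p : ProjPlane | f p.rep = 0}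

/-- The lines of the arrangement `A` passing through the point `p`. -/
def linesThrough (A : Finset (Set ProjPlane)) (p : ProjPlane) : Finset (Set ProjPlane) :=
  A.filter fun L => p ∈ L

/-- The multiplicity of a point `p` with respect to the arrangement `A`. -/
def mult (A : Finset (Set ProjPlane)) (p : ProjPlane) : ℕ :=
  (linesThrough A p).card

/-- `p` is a multiple point of the arrangement `A` (at least two lines pass through it). -/
def IsMultPoint (A : Finset (Set ProjPlane)) (p : ProjPlane) : Prop :=
  2 ≤ mult A p

/-- A `q`-cocycle of the line arrangement `A`: for every multiple point `p`,
if `q` divides the multiplicity then the values of `η` on the lines through `p` sum to `0`,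
and otherwise `η` is constant on the lines through `p`. -/
def IsCocycle (q : ℕ) (A : Finset (Set ProjPlane)) (η : Set ProjPlane → ZMod q) : Prop :=
  ∀ p : ProjPlane, IsMultPoint A p →
    ((q ∣ mult A p → ∑ L ∈ linesThrough A p, η L = 0) ∧
     (¬ q ∣ mult A p → ∀ L ∈ linesThrough A p, ∀ K ∈ linesThrough A p, η L = η K))

/-- A function on lines is non-constant on the arrangement `A`. -/
def NonConstant {α : Type*} (A : Finset (Set ProjPlane)) (η : Set ProjPlane → α) : Prop :=
  ∃ L ∈ A, ∃ K ∈ A, η L ≠ η K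

/-- A `(k,q)`-net structure on the line arrangement `A`, with classes `C 0, …, C (k-1)`:
the classes partition `A` into `k` classes of `q` lines each, and whenever two lines from
different classes meet, their intersection point lies on exactly one line of each class. -/
def IsNet (k q : ℕ) (A : Finset (Set ProjPlane)) (C : Fin k → Finset (Set ProjPlane)) : Prop :=
  (∀ L ∈ A, IsProjLine L) ∧
  A.card = k * q ∧
  (∀ i, (C i).card = q) ∧
  (∀ i j, i ≠ j → Disjoint (C i) (C j)) ∧
  (∀ i, C i ⊆ A) ∧
  (∀ L ∈ A, ∃ i, L ∈ C i) ∧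
  (∀ i j, i ≠ j → ∀ L ∈ C i, ∀ K ∈ C j, ∀ p : ProjPlane, p ∈ L → p ∈ K →
    ∀ m : Fin k, ∃! N, N ∈ C m ∧ p ∈ N)

/-- Lattice isomorphism of two line arrangements: a bijection between the lines such that
a subfamily of lines has a common point iff the image subfamily has a common point. -/
def LatticeIso (A B : Finset (Set ProjPlane)) : Prop :=
  ∃ φ : Set ProjPlane → Set ProjPlane, Set.BijOn φ ↑A ↑B ∧
    ∀ S : Finset (Set ProjPlane), S ⊆ A →
      ((∃ p : ProjPlane, ∀ L ∈ S, p ∈ L) ↔ ∃ p : ProjPlane, ∀ L ∈ S, p ∈ φ L)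

/-- The projective line with homogeneous equation `a·x + b·y + c·z = 0`. -/
def lineOf (a b c : ℂ) : Set ProjPlane :=
  {p : ProjPlane | a * p.rep 0 + b * p.rep 1 + c * p.rep 2 = 0}


-- ===== auxiliary lemmas =====


lemma core_det (a1 a2 a3 b1 b2 b3 u1 v1 w1 u2 v2 w2 u3 v3 w3 : ℂ)
    (e11 : u1*b1 + v1*a1 + w1 = 0) (e12 : u1*b2 + v1*a2 + w1 = 0) (e13 : u1*b3 + v1*a3 + w1 = 0)
    (e21 : u2*b2 + v2*a1 + w2 = 0) (e22 : u2*b3 + v2*a2 + w2 = 0) (e23 : u2*b1 + v2*a3 + w2 = 0)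
    (e31 : u3*b3 + v3*a1 + w3 = 0) (e32 : u3*b1 + v3*a2 + w3 = 0)
    (hn1 : ¬(u1 = 0 ∧ v1 = 0 ∧ w1 = 0)) (hn2 : ¬(u2 = 0 ∧ v2 = 0 ∧ w2 = 0))
    (ha : a1 ≠ a2) :
    u1*(v2*w3 - v3*w2) - v1*(u2*w3 - u3*w2) + w1*(u2*v3 - u3*v2) = 0 := by
  have d0 : a1 - a2 ≠ 0 := sub_ne_zero.mpr ha
  have qu1 : u1*((b1-b2)*(a2-a3)-(a1-a2)*(b2-b3)) = 0 := by
    linear_combination (a2-a3)*e11 - (a1-a3)*e12 + (a1-a2)*e13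
  have qv1 : v1*((b1-b2)*(a2-a3)-(a1-a2)*(b2-b3)) = 0 := by
    linear_combination (-(b2-b3))*e11 + (b1-b3)*e12 - (b1-b2)*e13
  have qw1 : w1*((b1-b2)*(a2-a3)-(a1-a2)*(b2-b3)) = 0 := by
    linear_combination ((b1-b2)*(a2-a3)-(a1-a2)*(b2-b3))*e11 - b1*qu1 - a1*qv1
  have qu2 : u2*((b2-b3)*(a2-a3)-(a1-a2)*(b3-b1)) = 0 := by
    linear_combination (a2-a3)*e21 - (a1-a3)*e22 + (a1-a2)*e23
  have qv2 : v2*((b2-b3)*(a2-a3)-(a1-a2)*(b3-b1)) = 0 := by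
    linear_combination (-(b3-b1))*e21 + (b2-b1)*e22 - (b2-b3)*e23
  have qw2 : w2*((b2-b3)*(a2-a3)-(a1-a2)*(b3-b1)) = 0 := by
    linear_combination ((b2-b3)*(a2-a3)-(a1-a2)*(b3-b1))*e21 - b2*qu2 - a1*qv2
  have hD1 : (b1-b2)*(a2-a3)-(a1-a2)*(b2-b3) = 0 := by
    by_contra h
    exact hn1 ⟨(mul_eq_zero.mp qu1).resolve_right h, (mul_eq_zero.mp qv1).resolve_right h,
      (mul_eq_zero.mp qw1).resolve_right h⟩
  have hD2 : (b2-b3)*(a2-a3)-(a1-a2)*(b3-b1) = 0 := by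
    by_contra h
    exact hn2 ⟨(mul_eq_zero.mp qu2).resolve_right h, (mul_eq_zero.mp qv2).resolve_right h,
      (mul_eq_zero.mp qw2).resolve_right h⟩
  have hQ : b1^2+b2^2+b3^2-b1*b2-b2*b3-b3*b1 = 0 := by
    have h : (a1-a2)*(b1^2+b2^2+b3^2-b1*b2-b2*b3-b3*b1) = 0 := by
      linear_combination (b3-b2)*hD1 + (b1-b2)*hD2
    exact (mul_eq_zero.mp h).resolve_left d0
  have p1 : v1*(a1-a2) = u1*(b2-b1) := by linear_combination e11 - e12
  have p2 : v2*(a1-a2) = u2*(b3-b2) := by linear_combination e21 - e22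
  have p3 : v3*(a1-a2) = u3*(b1-b3) := by linear_combination e31 - e32
  have W1 : w1*(a1-a2) = u1*(a2*b1-a1*b2) := by linear_combination a1*e12 - a2*e11
  have W2 : w2*(a1-a2) = u2*(a2*b2-a1*b3) := by linear_combination a1*e22 - a2*e21
  have W3 : w3*(a1-a2) = u3*(a2*b3-a1*b1) := by linear_combination a1*e32 - a2*e31
  have key : (a1-a2)^3 * (u1*(v2*w3 - v3*w2) - v1*(u2*w3 - u3*w2) + w1*(u2*v3 - u3*v2)) = 0 := by
    linear_combination ((a1-a2)^2*(w2*u3 - u2*w3))*p1 + (-(u2*u3*(a1-a2)*(2*b3-b1-b2)))*W1 +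
      ((a1-a2)^2*(u1*w3 - w1*u3))*p2 + (-(u1*u3*(a1-a2)*(2*b1-b2-b3)))*W2 +
      ((a1-a2)^2*(w1*u2 - u1*w2))*p3 + (-(u1*u2*(a1-a2)*(2*b2-b1-b3)))*W3 +
      (-(u1*u2*u3*(a1-a2)^2))*hQ
  exact (mul_eq_zero.mp key).resolve_left (pow_ne_zero 3 d0)

-- rep of mk is a unit multiple
lemma rep_mk_smul (v : Fin 3 → ℂ) (hv : v ≠ 0) :
    ∃ a : ℂˣ, (Projectivization.mk ℂ v hv).rep = a • v := by
  have h := Projectivization.mk_rep (Projectivization.mk ℂ v hv)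
  rw [Projectivization.mk_eq_mk_iff] at h
  obtain ⟨a, ha⟩ := h
  exact ⟨a, ha.symm⟩

lemma mem_line_mk (f : (Fin 3 → ℂ) →ₗ[ℂ] ℂ) (v : Fin 3 → ℂ) (hv : v ≠ 0) :
    Projectivization.mk ℂ v hv ∈ {p : ProjPlane | f p.rep = 0} ↔ f v = 0 := by
  obtain ⟨a, ha⟩ := rep_mk_smul v hv
  have hs : (a : ℂ) ≠ 0 := a.ne_zero
  simp only [Set.mem_setOf_eq, ha, Units.smul_def, map_smul, smul_eq_mul]
  constructor
  · intro h
    rcases mul_eq_zero.mp h with h | h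
    · exact absurd h hs
    · exact h
  · intro h; rw [h, mul_zero]

lemma finrank_V : Module.finrank ℂ (Fin 3 → ℂ) = 3 := Module.finrank_fin_fun ℂ

lemma finrank_ker_ge (f : (Fin 3 → ℂ) →ₗ[ℂ] ℂ) :
    2 ≤ Module.finrank ℂ (LinearMap.ker f) := by
  have h1 := LinearMap.finrank_range_add_finrank_ker f
  have h2 : Module.finrank ℂ (LinearMap.range f) ≤ 1 := by
    have := Submodule.finrank_le (LinearMap.range f)
    simpa using this
  rw [finrank_V] at h1
  omega

lemma exists_common_zero (f g : (Fin 3 → ℂ) →ₗ[ℂ] ℂ) :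
    ∃ v : Fin 3 → ℂ, v ≠ 0 ∧ f v = 0 ∧ g v = 0 := by
  have hsup : Module.finrank ℂ ((LinearMap.ker f) ⊔ (LinearMap.ker g) : Submodule ℂ (Fin 3 → ℂ)) ≤ 3 := by
    have := Submodule.finrank_le ((LinearMap.ker f) ⊔ (LinearMap.ker g) : Submodule ℂ (Fin 3 → ℂ))
    simpa [finrank_V] using this
  have h := Submodule.finrank_sup_add_finrank_inf_eq (LinearMap.ker f) (LinearMap.ker g)
  have hf := finrank_ker_ge f
  have hg := finrank_ker_ge g
  have hpos : 0 < Module.finrank ℂ ((LinearMap.ker f) ⊓ (LinearMap.ker g) : Submodule ℂ (Fin 3 → ℂ)) := by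
    omega
  have hne : ((LinearMap.ker f) ⊓ (LinearMap.ker g) : Submodule ℂ (Fin 3 → ℂ)) ≠ ⊥ := by
    intro hbot
    rw [hbot] at hpos
    simp at hpos
  obtain ⟨v, hv, hvne⟩ := Submodule.ne_bot_iff _ |>.mp hne
  exact ⟨v, hvne, (Submodule.mem_inf.mp hv).1, (Submodule.mem_inf.mp hv).2⟩

lemma lines_meet {L K : Set ProjPlane} (hL : IsProjLine L) (hK : IsProjLine K) :
    ∃ p, p ∈ L ∧ p ∈ K := by
  obtain ⟨f, hf, rfl⟩ := hL
  obtain ⟨g, hg, rfl⟩ := hK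
  obtain ⟨v, hv, hfv, hgv⟩ := exists_common_zero f g
  exact ⟨Projectivization.mk ℂ v hv, (mem_line_mk f v hv).mpr hfv, (mem_line_mk g v hv).mpr hgv⟩

lemma rep_indep {p q : ProjPlane} (hpq : p ≠ q) :
    LinearIndependent ℂ ![p.rep, q.rep] := by
  rw [linearIndependent_fin2]
  refine ⟨by simpa using q.rep_nonzero, fun a ha => ?_⟩
  simp only [Matrix.cons_val_one, Matrix.head_cons, Matrix.cons_val_zero] at ha
  apply hpq
  have ha0 : a ≠ 0 := by
    rintro rfl
    exact p.rep_nonzero (by simpa using ha.symm)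
  rw [← Projectivization.mk_rep p, ← Projectivization.mk_rep q]
  rw [Projectivization.mk_eq_mk_iff']
  exact ⟨a, ha⟩

lemma ker_eq_span {f : (Fin 3 → ℂ) →ₗ[ℂ] ℂ} (hf : f ≠ 0) {v w : Fin 3 → ℂ}
    (hvw : LinearIndependent ℂ ![v, w]) (hfv : f v = 0) (hfw : f w = 0) :
    LinearMap.ker f = Submodule.span ℂ {v, w} := by
  have hle : Submodule.span ℂ {v, w} ≤ LinearMap.ker f := by
    rw [Submodule.span_le]
    rintro x (rfl | rfl) <;> simpa [LinearMap.mem_ker]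
  have hspan : Module.finrank ℂ (Submodule.span ℂ {v, w} : Submodule ℂ (Fin 3 → ℂ)) = 2 := by
    have : Submodule.span ℂ {v, w} = Submodule.span ℂ (Set.range ![v, w]) := by
      congr 1
      rw [Matrix.range_cons, Matrix.range_cons, Matrix.range_empty]
      simp [Set.pair_comm]
    rw [this, finrank_span_eq_card hvw]
    simp
  have hker : Module.finrank ℂ (LinearMap.ker f) ≤ 2 := by
    have h1 := LinearMap.finrank_range_add_finrank_ker f
    rw [finrank_V] at h1
    have h2 : 1 ≤ Module.finrank ℂ (LinearMap.range f) := by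
      rcases Nat.eq_zero_or_pos (Module.finrank ℂ (LinearMap.range f)) with h | h
      · exfalso
        rw [Submodule.finrank_eq_zero] at h
        exact hf (LinearMap.range_eq_bot.mp h)
      · exact h
    omega
  exact (Submodule.eq_of_le_of_finrank_le hle (by omega)).symm

lemma meet_unique {L K : Set ProjPlane} (hL : IsProjLine L) (hK : IsProjLine K) (hne : L ≠ K)
    {p q : ProjPlane} (hpL : p ∈ L) (hpK : p ∈ K) (hqL : q ∈ L) (hqK : q ∈ K) : p = q := by
  by_contra hpq
  apply hne
  obtain ⟨f, hf, rfl⟩ := hL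
  obtain ⟨g, hg, rfl⟩ := hK
  have hind := rep_indep hpq
  have h1 : LinearMap.ker f = Submodule.span ℂ {p.rep, q.rep} := ker_eq_span hf hind hpL hqL
  have h2 : LinearMap.ker g = Submodule.span ℂ {p.rep, q.rep} := ker_eq_span hg hind hpK hqK
  ext x
  simp only [Set.mem_setOf_eq, ← LinearMap.mem_ker, h1, h2]

section NetLemmas

variable {A : Finset (Set ProjPlane)} {C : Fin 3 → Finset (Set ProjPlane)}

lemma net_line (hA : IsNet 3 3 A C) {i : Fin 3} {L : Set ProjPlane} (hL : L ∈ C i) :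
    IsProjLine L :=
  hA.1 L (hA.2.2.2.2.1 i hL)

lemma net_ne_of_classes (hA : IsNet 3 3 A C) {i j : Fin 3} (hij : i ≠ j)
    {L K : Set ProjPlane} (hL : L ∈ C i) (hK : K ∈ C j) : L ≠ K := by
  intro h
  exact Finset.disjoint_left.mp (hA.2.2.2.1 i j hij) hL (h ▸ hK)

lemma net_two_lines (hA : IsNet 3 3 A C) (i : Fin 3) :
    ∃ L1 L2, L1 ∈ C i ∧ L2 ∈ C i ∧ L1 ≠ L2 := by
  have h : 1 < (C i).card := by rw [hA.2.2.1 i]; norm_num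
  obtain ⟨L1, hL1, L2, hL2, h12⟩ := Finset.one_lt_card.mp h
  exact ⟨L1, L2, hL1, hL2, h12⟩

/-- If two distinct lines of class `i` pass through `p`, then every line of the
arrangement through `p` is in class `i`. -/
lemma class_only (hA : IsNet 3 3 A C) {i : Fin 3} {L1 L2 : Set ProjPlane}
    (hL1 : L1 ∈ C i) (hL2 : L2 ∈ C i) (h12 : L1 ≠ L2) {p : ProjPlane}
    (hp1 : p ∈ L1) (hp2 : p ∈ L2) {K : Set ProjPlane} (hK : K ∈ A) (hpK : p ∈ K) :
    K ∈ C i := by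
  obtain ⟨m, hm⟩ := hA.2.2.2.2.2.1 K hK
  by_cases hmi : m = i
  · exact hmi ▸ hm
  · exfalso
    obtain ⟨N, _, hNuniq⟩ := hA.2.2.2.2.2.2 m i hmi K hm L1 hL1 p hpK hp1 i
    exact h12 ((hNuniq L1 ⟨hL1, hp1⟩).trans (hNuniq L2 ⟨hL2, hp2⟩).symm)

/-- The vertex of a concurrent class lies on no line of another class. -/
lemma vertex_not_on_other (hA : IsNet 3 3 A C) {i j : Fin 3} (hij : j ≠ i)
    {P : ProjPlane} (hP : ∀ L ∈ C i, P ∈ L) {K : Set ProjPlane} (hK : K ∈ C j) :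
    P ∉ K := by
  intro hPK
  obtain ⟨L1, L2, hL1, hL2, h12⟩ := net_two_lines hA i
  have : K ∈ C i := class_only hA hL1 hL2 h12 (hP L1 hL1) (hP L2 hL2)
    (hA.2.2.2.2.1 j hK) hPK
  exact Finset.disjoint_left.mp (hA.2.2.2.1 j i hij) hK this

end NetLemmas

lemma vec3_mem {γ : Type*} [DecidableEq γ] {x1 x2 x3 : γ} (i : Fin 3) :
    (![x1, x2, x3] : Fin 3 → γ) i ∈ ({x1, x2, x3} : Finset γ) := by
  fin_cases i <;> simp

lemma vec3_cases {γ : Type*} [DecidableEq γ] {x1 x2 x3 y : γ}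
    (hy : y ∈ ({x1, x2, x3} : Finset γ)) : ∃ i : Fin 3, y = (![x1, x2, x3] : Fin 3 → γ) i := by
  simp only [Finset.mem_insert, Finset.mem_singleton] at hy
  rcases hy with rfl | rfl | rfl
  exacts [⟨0, rfl⟩, ⟨1, rfl⟩, ⟨2, rfl⟩]

lemma vec3_inj {γ : Type*} {x1 x2 x3 : γ} (h12 : x1 ≠ x2) (h13 : x1 ≠ x3) (h23 : x2 ≠ x3) :
    ∀ i j : Fin 3, (![x1, x2, x3] : Fin 3 → γ) i = (![x1, x2, x3] : Fin 3 → γ) j → i = j := by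
  intro i j
  fin_cases i <;> fin_cases j <;>
    simp [h12, h13, h23, h12.symm, h13.symm, h23.symm]


def cyc : Fin 3 → Fin 3 := ![1, 2, 0]

lemma latin_cases : ∀ t0 t1 t2 : Fin 3 → Fin 3,
    (∀ x y, t0 x = t0 y → x = y) → (∀ x y, t1 x = t1 y → x = y) →
    (∀ x y, t2 x = t2 y → x = y) →
    (∀ x, t0 x ≠ t1 x) → (∀ x, t0 x ≠ t2 x) → (∀ x, t1 x ≠ t2 x) →
    ((∀ x, t1 x = t0 (cyc x)) ∧ (∀ x, t2 x = t0 (cyc (cyc x)))) ∨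
    ((∀ x, t2 x = t0 (cyc x)) ∧ (∀ x, t1 x = t0 (cyc (cyc x)))) := by decide

section Third

variable {A : Finset (Set ProjPlane)} {C : Fin 3 → Finset (Set ProjPlane)}

lemma third_conc (hA : IsNet 3 3 A C) {a b c : Fin 3} (hab : a ≠ b) (hac : a ≠ c)
    (hbc : b ≠ c) (hCa : ∃ p : ProjPlane, ∀ L ∈ C a, p ∈ L)
    (hCb : ∃ p : ProjPlane, ∀ L ∈ C b, p ∈ L) :
    ∃ p : ProjPlane, ∀ L ∈ C c, p ∈ L := by
  classical
  obtain ⟨P, hP⟩ := hCa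
  obtain ⟨Q, hQ⟩ := hCb
  -- P ≠ Q
  obtain ⟨La1', La2', hLa1', hLa2', hLa12'⟩ := net_two_lines hA a
  have hPQ : P ≠ Q := by
    intro h
    exact vertex_not_on_other hA hab hQ hLa1' (h ▸ hP La1' hLa1')
  set pv := P.rep with hpv
  set qv := Q.rep with hqv
  have hind2 : LinearIndependent ℂ ![pv, qv] := rep_indep hPQ
  -- a vector outside the span of pv, qv
  have hspanne : Submodule.span ℂ {pv, qv} ≠ (⊤ : Submodule ℂ (Fin 3 → ℂ)) := by
    intro htop
    have h1 : Submodule.span ℂ {pv, qv} = Submodule.span ℂ (Set.range ![pv, qv]) := by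
      congr 1
      rw [Matrix.range_cons, Matrix.range_cons, Matrix.range_empty]
      simp only [Set.union_empty, Set.union_singleton]
      exact Set.pair_comm pv qv
    have h2 : Module.finrank ℂ (Submodule.span ℂ {pv, qv} : Submodule ℂ (Fin 3 → ℂ)) = 2 := by
      rw [h1, finrank_span_eq_card hind2]; simp
    rw [htop] at h2
    have := finrank_V
    rw [finrank_top ℂ (Fin 3 → ℂ)] at h2
    omega
  obtain ⟨r, hr⟩ : ∃ r, r ∉ Submodule.span ℂ {pv, qv} := by
    by_contra hcon
    push_neg at hcon
    exact hspanne (Submodule.eq_top_iff'.mpr hcon)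
  have hind3 : LinearIndependent ℂ ![r, pv, qv] := by
    rw [show (![r, pv, qv] : Fin 3 → (Fin 3 → ℂ)) = Fin.cons r ![pv, qv] from rfl]
    rw [linearIndependent_fin_cons]
    refine ⟨hind2, ?_⟩
    rwa [show Set.range ![pv, qv] = {pv, qv} by
      rw [Matrix.range_cons, Matrix.range_cons, Matrix.range_empty]
      simp only [Set.union_empty, Set.union_singleton]
      exact Set.pair_comm qv pv]
  have hcard3 : Fintype.card (Fin 3) = Module.finrank ℂ (Fin 3 → ℂ) := by
    simp [finrank_V]
  set B := basisOfLinearIndependentOfCardEqFinrank hind3 hcard3 with hB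
  have hBcoe : ⇑B = ![r, pv, qv] := coe_basisOfLinearIndependentOfCardEqFinrank hind3 hcard3
  have hext : ∀ φ : (Fin 3 → ℂ) →ₗ[ℂ] ℂ, φ pv = 0 → φ qv = 0 → φ r = 0 → φ = 0 := by
    intro φ h1 h2 h3
    apply B.ext
    intro i
    rw [hBcoe]
    fin_cases i <;> simp [h1, h2, h3]
  have hcomb : ∀ x y z : ℂ, x • pv + y • qv + z • r = 0 → x = 0 ∧ y = 0 ∧ z = 0 := by
    intro x y z hxyz
    have hli := Fintype.linearIndependent_iff.mp hind3 ![z, x, y] (by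
      rw [Fin.sum_univ_three]
      simpa using (by linear_combination (norm := module) hxyz :
        z • r + x • pv + y • qv = (0 : Fin 3 → ℂ)))
    exact ⟨hli 1, hli 2, hli 0⟩
  -- enumerate the classes
  obtain ⟨La1, La2, La3, ha12, ha13, ha23, hCaeq⟩ := Finset.card_eq_three.mp (hA.2.2.1 a)
  obtain ⟨Mb1, Mb2, Mb3, hb12, hb13, hb23, hCbeq⟩ := Finset.card_eq_three.mp (hA.2.2.1 b)
  obtain ⟨Nc1, Nc2, Nc3, hc12, hc13, hc23, hCceq⟩ := Finset.card_eq_three.mp (hA.2.2.1 c)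
  set La : Fin 3 → Set ProjPlane := ![La1, La2, La3] with hLadef
  set Mb : Fin 3 → Set ProjPlane := ![Mb1, Mb2, Mb3] with hMbdef
  set Nc : Fin 3 → Set ProjPlane := ![Nc1, Nc2, Nc3] with hNcdef
  have hLamem : ∀ i, La i ∈ C a := by intro i; rw [hCaeq, hLadef]; exact vec3_mem i
  have hMbmem : ∀ j, Mb j ∈ C b := by intro j; rw [hCbeq, hMbdef]; exact vec3_mem j
  have hNcmem : ∀ m, Nc m ∈ C c := by intro m; rw [hCceq, hNcdef]; exact vec3_mem m
  have hmemMb : ∀ M ∈ C b, ∃ j, M = Mb j := by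
    intro M hM
    rw [hCbeq] at hM
    rw [hMbdef]
    exact vec3_cases hM
  have hmemNc : ∀ N ∈ C c, ∃ m, N = Nc m := by
    intro N hN
    rw [hCceq] at hN
    rw [hNcdef]
    exact vec3_cases hN
  have hLainj : ∀ x y, La x = La y → x = y := by
    rw [hLadef]; exact vec3_inj ha12 ha13 ha23
  have hNcinj : ∀ x y, Nc x = Nc y → x = y := by
    rw [hNcdef]; exact vec3_inj hc12 hc13 hc23
  -- functionals
  choose f hf using fun i => net_line hA (hLamem i)
  choose g hg using fun j => net_line hA (hMbmem j)
  choose h hh using fun m => net_line hA (hNcmem m)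
  have hfp : ∀ i, f i pv = 0 := by
    intro i
    have := hP (La i) (hLamem i)
    rw [(hf i).2] at this
    exact this
  have hgq : ∀ j, g j qv = 0 := by
    intro j
    have := hQ (Mb j) (hMbmem j)
    rw [(hg j).2] at this
    exact this
  have hfq : ∀ i, f i qv ≠ 0 := by
    intro i hzero
    exact vertex_not_on_other hA hab hQ (hLamem i) (by rw [(hf i).2]; exact hzero)
  have hgp : ∀ j, g j pv ≠ 0 := by
    intro j hzero
    exact vertex_not_on_other hA hab.symm hP (hMbmem j) (by rw [(hg j).2]; exact hzero)
  set α : Fin 3 → ℂ := fun i => -(f i r) / (f i qv) with hα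
  set β : Fin 3 → ℂ := fun j => -(g j r) / (g j pv) with hβ
  set gv : Fin 3 → Fin 3 → (Fin 3 → ℂ) := fun i j => β j • pv + α i • qv + r with hgv
  have hgvne : ∀ i j, gv i j ≠ 0 := by
    intro i j hzero
    have := (hcomb (β j) (α i) 1 (by rw [one_smul]; simpa [hgv] using hzero)).2.2
    norm_num at this
  have hfgrid : ∀ i j, f i (gv i j) = 0 := by
    intro i j
    simp only [hgv, map_add, map_smul, smul_eq_mul, hfp, mul_zero, hα]
    field_simp [hfq i]
    ring
  have hggrid : ∀ i j, g j (gv i j) = 0 := by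
    intro i j
    simp only [hgv, map_add, map_smul, smul_eq_mul, hgq, mul_zero, hβ]
    field_simp [hgp j]
    ring
  set Gp : Fin 3 → Fin 3 → ProjPlane := fun i j => Projectivization.mk ℂ (gv i j) (hgvne i j)
    with hGp
  have hGpLa : ∀ i j, Gp i j ∈ La i := by
    intro i j
    rw [(hf i).2, hGp]
    exact (mem_line_mk (f i) _ (hgvne i j)).mpr (hfgrid i j)
  have hGpMb : ∀ i j, Gp i j ∈ Mb j := by
    intro i j
    rw [(hg j).2, hGp]
    exact (mem_line_mk (g j) _ (hgvne i j)).mpr (hggrid i j)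
  -- α distinct (at least for indices 0 and 1)
  have hLa_of_α : ∀ i j, α i = α j → La i = La j := by
    intro i j hij
    have hcne : f j qv / f i qv ≠ 0 := div_ne_zero (hfq j) (hfq i)
    have h0 : f j - (f j qv / f i qv) • f i = 0 := by
      apply hext
      · simp [hfp]
      · simp only [LinearMap.sub_apply, LinearMap.smul_apply, smul_eq_mul]
        field_simp [hfq i]
        ring
      · have hi : f i r = -(α i) * (f i qv) := by simp only [hα]; field_simp [hfq i]
        have hj : f j r = -(α j) * (f j qv) := by simp only [hα]; field_simp [hfq j]
        simp only [LinearMap.sub_apply, LinearMap.smul_apply, smul_eq_mul, hi, hj, hij]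
        field_simp [hfq i]
        ring
    have hcc : f j = (f j qv / f i qv) • f i := by rwa [sub_eq_zero] at h0
    rw [(hf i).2, (hf j).2, hcc]
    ext p
    simp only [Set.mem_setOf_eq, LinearMap.smul_apply, smul_eq_mul]
    constructor
    · intro hx; rw [hx, mul_zero]
    · intro hx
      rcases mul_eq_zero.mp hx with hx | hx
      · exact absurd hx hcne
      · exact hx
  have hα01 : α 0 ≠ α 1 := by
    intro hαeq
    have h01 := hLa_of_α 0 1 hαeq
    rw [hLadef] at h01
    simp only [Matrix.cons_val_zero, Matrix.cons_val_one, Matrix.head_cons] at h01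
    exact ha12 h01
  -- membership of grid points on class-c lines, via functional vanishing
  have hGpNc : ∀ m i j, h m (gv i j) = 0 → Gp i j ∈ Nc m := by
    intro m i j hz
    rw [(hh m).2, hGp]
    exact (mem_line_mk (h m) _ (hgvne i j)).mpr hz
  have hNcGp : ∀ m i j, Gp i j ∈ Nc m → h m (gv i j) = 0 := by
    intro m i j hz
    rw [(hh m).2, hGp] at hz
    exact (mem_line_mk (h m) _ (hgvne i j)).mp hz
  -- for every class-c line and every row, there is a column index
  have hσex : ∀ m i : Fin 3, ∃ j, h m (gv i j) = 0 := by
    intro m i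
    obtain ⟨s, hsL, hsN⟩ := lines_meet (net_line hA (hLamem i)) (net_line hA (hNcmem m))
    obtain ⟨Mj, ⟨hMjb, hsMj⟩, -⟩ :=
      hA.2.2.2.2.2.2 a c hac (La i) (hLamem i) (Nc m) (hNcmem m) s hsL hsN b
    obtain ⟨j, rfl⟩ := hmemMb Mj hMjb
    have hsG : s = Gp i j := meet_unique (net_line hA (hLamem i)) (net_line hA (hMbmem j))
      (net_ne_of_classes hA hab (hLamem i) (hMbmem j)) hsL hsMj (hGpLa i j) (hGpMb i j)
    exact ⟨j, hNcGp m i j (hsG ▸ hsN)⟩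
  choose σ hσ using hσex
  have hσinj : ∀ m x y : Fin 3, σ m x = σ m y → x = y := by
    intro m x y hxy
    by_contra hne'
    have h1 : Gp x (σ m x) ∈ Nc m := hGpNc m x (σ m x) (hσ m x)
    have h2 : Gp y (σ m x) ∈ Nc m := by
      have := hGpNc m y (σ m y) (hσ m y)
      rwa [← hxy] at this
    have hGne : Gp x (σ m x) ≠ Gp y (σ m x) := by
      intro heq
      have hpx : Gp x (σ m x) ∈ La x := hGpLa x (σ m x)
      have hpy : Gp x (σ m x) ∈ La y := heq ▸ hGpLa y (σ m x)
      obtain ⟨N', -, hN'uniq⟩ := hA.2.2.2.2.2.2 b a hab.symm (Mb (σ m x)) (hMbmem (σ m x))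
        (La x) (hLamem x) (Gp x (σ m x)) (hGpMb x (σ m x)) hpx a
      exact hne' (hLainj x y ((hN'uniq (La x) ⟨hLamem x, hpx⟩).trans
        (hN'uniq (La y) ⟨hLamem y, hpy⟩).symm))
    exact hGne (meet_unique (net_line hA (hNcmem m)) (net_line hA (hMbmem (σ m x)))
      (net_ne_of_classes hA hbc.symm (hNcmem m) (hMbmem (σ m x))) h1 (hGpMb x (σ m x))
      h2 (hGpMb y (σ m x)))
  have hdisc : ∀ m m' : Fin 3, m ≠ m' → ∀ x, σ m x ≠ σ m' x := by
    intro m m' hmm' x hje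
    have h1 : Gp x (σ m x) ∈ Nc m := hGpNc m x (σ m x) (hσ m x)
    have h2 : Gp x (σ m x) ∈ Nc m' := by
      have := hGpNc m' x (σ m' x) (hσ m' x)
      rwa [← hje] at this
    obtain ⟨N', -, hN'uniq⟩ := hA.2.2.2.2.2.2 a c hac (La x) (hLamem x) (Nc m) (hNcmem m)
      (Gp x (σ m x)) (hGpLa x (σ m x)) h1 c
    exact hmm' (hNcinj m m' ((hN'uniq (Nc m) ⟨hNcmem m, h1⟩).trans
      (hN'uniq (Nc m') ⟨hNcmem m', h2⟩).symm))
  have E : ∀ m i : Fin 3, (h m pv) * (β (σ m i)) + (h m qv) * (α i) + h m r = 0 := by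
    intro m i
    have hz := hσ m i
    rw [hgv] at hz
    simp only [map_add, map_smul, smul_eq_mul] at hz
    linear_combination hz
  have hn : ∀ m, ¬((h m) pv = 0 ∧ (h m) qv = 0 ∧ (h m) r = 0) := by
    rintro m ⟨h1, h2, h3⟩
    exact (hh m).1 (hext (h m) h1 h2 h3)
  have hdet : (h 0 pv) * ((h 1 qv) * (h 2 r) - (h 2 qv) * (h 1 r))
      - (h 0 qv) * ((h 1 pv) * (h 2 r) - (h 2 pv) * (h 1 r))
      + (h 0 r) * ((h 1 pv) * (h 2 qv) - (h 2 pv) * (h 1 qv)) = 0 := by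
    rcases latin_cases (σ 0) (σ 1) (σ 2) (hσinj 0) (hσinj 1) (hσinj 2)
      (hdisc 0 1 (by decide)) (hdisc 0 2 (by decide)) (hdisc 1 2 (by decide)) with
      ⟨hc1, hc2⟩ | ⟨hc1, hc2⟩
    · have e21 : (h 1 pv) * (β (σ 0 1)) + (h 1 qv) * (α 0) + h 1 r = 0 := by
        have t := E 1 0; rwa [hc1 0] at t
      have e22 : (h 1 pv) * (β (σ 0 2)) + (h 1 qv) * (α 1) + h 1 r = 0 := by
        have t := E 1 1; rwa [hc1 1] at t
      have e23 : (h 1 pv) * (β (σ 0 0)) + (h 1 qv) * (α 2) + h 1 r = 0 := by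
        have t := E 1 2; rwa [hc1 2] at t
      have e31 : (h 2 pv) * (β (σ 0 2)) + (h 2 qv) * (α 0) + h 2 r = 0 := by
        have t := E 2 0; rwa [hc2 0] at t
      have e32 : (h 2 pv) * (β (σ 0 0)) + (h 2 qv) * (α 1) + h 2 r = 0 := by
        have t := E 2 1; rwa [hc2 1] at t
      have hX := core_det (α 0) (α 1) (α 2) (β (σ 0 0)) (β (σ 0 1)) (β (σ 0 2))
        (h 0 pv) (h 0 qv) (h 0 r) (h 1 pv) (h 1 qv) (h 1 r) (h 2 pv) (h 2 qv) (h 2 r)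
        (E 0 0) (E 0 1) (E 0 2) e21 e22 e23 e31 e32 (hn 0) (hn 1) hα01
      linear_combination hX
    · have e21 : (h 2 pv) * (β (σ 0 1)) + (h 2 qv) * (α 0) + h 2 r = 0 := by
        have t := E 2 0; rwa [hc1 0] at t
      have e22 : (h 2 pv) * (β (σ 0 2)) + (h 2 qv) * (α 1) + h 2 r = 0 := by
        have t := E 2 1; rwa [hc1 1] at t
      have e23 : (h 2 pv) * (β (σ 0 0)) + (h 2 qv) * (α 2) + h 2 r = 0 := by
        have t := E 2 2; rwa [hc1 2] at t
      have e31 : (h 1 pv) * (β (σ 0 2)) + (h 1 qv) * (α 0) + h 1 r = 0 := by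
        have t := E 1 0; rwa [hc2 0] at t
      have e32 : (h 1 pv) * (β (σ 0 0)) + (h 1 qv) * (α 1) + h 1 r = 0 := by
        have t := E 1 1; rwa [hc2 1] at t
      have hX := core_det (α 0) (α 1) (α 2) (β (σ 0 0)) (β (σ 0 1)) (β (σ 0 2))
        (h 0 pv) (h 0 qv) (h 0 r) (h 2 pv) (h 2 qv) (h 2 r) (h 1 pv) (h 1 qv) (h 1 r)
        (E 0 0) (E 0 1) (E 0 2) e21 e22 e23 e31 e32 (hn 0) (hn 2) hα01
      linear_combination -hX
  set Mx : Matrix (Fin 3) (Fin 3) ℂ := Matrix.of ![![h 0 pv, h 0 qv, h 0 r],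
    ![h 1 pv, h 1 qv, h 1 r], ![h 2 pv, h 2 qv, h 2 r]] with hMx
  have hdetM : Mx.det = 0 := by
    rw [Matrix.det_fin_three]
    simp only [hMx, Matrix.of_apply, Matrix.cons_val', Matrix.cons_val_zero,
      Matrix.cons_val_one, Matrix.head_cons, Matrix.empty_val', Matrix.cons_val_fin_one,
      Matrix.head_fin_const, Matrix.cons_val_two, Matrix.tail_cons]
    linear_combination hdet
  obtain ⟨x, hx0, hxv⟩ := Matrix.exists_mulVec_eq_zero_iff.mpr hdetM
  have h0c := congr_fun hxv 0
  have h1c := congr_fun hxv 1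
  have h2c := congr_fun hxv 2
  simp only [Matrix.mulVec, dotProduct, Fin.sum_univ_three, hMx, Matrix.of_apply,
    Matrix.cons_val', Matrix.cons_val_zero, Matrix.cons_val_one, Matrix.head_cons,
    Matrix.empty_val', Matrix.cons_val_fin_one, Matrix.head_fin_const, Matrix.cons_val_two,
    Matrix.tail_cons, Pi.zero_apply] at h0c h1c h2c
  set wv : Fin 3 → ℂ := x 0 • pv + x 1 • qv + x 2 • r with hwv
  have hwvne : wv ≠ 0 := by
    intro hz
    obtain ⟨hh1, hh2, hh3⟩ := hcomb _ _ _ (by rw [hwv] at hz; exact hz)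
    apply hx0
    funext idx
    fin_cases idx <;> assumption
  have hNw : ∀ m, h m wv = 0 := by
    intro m
    have hexp : h m wv = h m pv * x 0 + h m qv * x 1 + h m r * x 2 := by
      rw [hwv]
      simp only [map_add, map_smul, smul_eq_mul]
      ring
    rw [hexp]
    fin_cases m
    · exact (by linear_combination h0c : h 0 pv * x 0 + h 0 qv * x 1 + h 0 r * x 2 = 0)
    · exact (by linear_combination h1c : h 1 pv * x 0 + h 1 qv * x 1 + h 1 r * x 2 = 0)
    · exact (by linear_combination h2c : h 2 pv * x 0 + h 2 qv * x 1 + h 2 r * x 2 = 0)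
  refine ⟨Projectivization.mk ℂ wv hwvne, ?_⟩
  intro L hL
  obtain ⟨m, rfl⟩ := hmemNc L hL
  rw [(hh m).2]
  exact (mem_line_mk (h m) wv hwvne).mpr (hNw m)

end Third


/-- In a (3,3)-net, if two of the classes each consist of three concurrent
lines, then so does the third; equivalently, no (3,3)-net has exactly 11 triple points. -/
theorem statement5 (A : Finset (Set ProjPlane)) (C : Fin 3 → Finset (Set ProjPlane))
    (hA : IsNet 3 3 A C) :
    (∀ i j : Fin 3, i ≠ j →
      (∃ p : ProjPlane, ∀ L ∈ C i, p ∈ L) → (∃ p : ProjPlane, ∀ L ∈ C j, p ∈ L) →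
        ∀ k : Fin 3, ∃ p : ProjPlane, ∀ L ∈ C k, p ∈ L) ∧
    {p : ProjPlane | mult A p = 3}.ncard ≠ 11 := by
  classical
  have hpart1 : ∀ i j : Fin 3, i ≠ j →
      (∃ p : ProjPlane, ∀ L ∈ C i, p ∈ L) → (∃ p : ProjPlane, ∀ L ∈ C j, p ∈ L) →
        ∀ k : Fin 3, ∃ p : ProjPlane, ∀ L ∈ C k, p ∈ L := by
    intro i j hij hI hJ k
    by_cases hki : k = i
    · subst hki; exact hI
    by_cases hkj : k = j
    · subst hkj; exact hJ
    exact third_conc hA hij (fun hh => hki hh.symm) (fun hh => hkj hh.symm) hI hJ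
  refine ⟨hpart1, ?_⟩
  intro h11
  have hzv : (![1, 0, 0] : Fin 3 → ℂ) ≠ 0 := by
    intro hh; simpa using congr_fun hh 0
  set z : ProjPlane := Projectivization.mk ℂ ![1, 0, 0] hzv with hz
  set pt : Set ProjPlane → Set ProjPlane → ProjPlane :=
    fun L M => if h : ∃ p : ProjPlane, p ∈ L ∧ p ∈ M then h.choose else z with hptdef
  have hpt : ∀ L M, L ∈ C 0 → M ∈ C 1 → pt L M ∈ L ∧ pt L M ∈ M := by
    intro L M hL hM
    have hex : ∃ p : ProjPlane, p ∈ L ∧ p ∈ M :=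
      lines_meet (net_line hA hL) (net_line hA hM)
    rw [hptdef]
    simp only [dif_pos hex]
    exact hex.choose_spec
  set vert : Fin 3 → ProjPlane :=
    fun i => if h : ∃ p : ProjPlane, ∀ L ∈ C i, p ∈ L then h.choose else z with hvert
  have hvertp : ∀ i, (∃ p : ProjPlane, ∀ L ∈ C i, p ∈ L) → ∀ L ∈ C i, vert i ∈ L := by
    intro i hi
    rw [hvert]
    simp only [dif_pos hi]
    exact hi.choose_spec
  have huniq : ∀ (p : ProjPlane) (i j : Fin 3), i ≠ j → ∀ L ∈ C i, ∀ K ∈ C j, p ∈ L → p ∈ K →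
      ∀ m : Fin 3, ∃! N, N ∈ C m ∧ p ∈ N := fun p i j hij L hL K hK h1 h2 =>
    hA.2.2.2.2.2.2 i j hij L hL K hK p h1 h2
  -- grid points have multiplicity 3
  have hmultgrid : ∀ p : ProjPlane, (∃ L ∈ C 0, ∃ M ∈ C 1, p ∈ L ∧ p ∈ M) → mult A p = 3 := by
    rintro p ⟨L, hL, M, hM, hpL, hpM⟩
    obtain ⟨N, ⟨hN2, hpN⟩, -⟩ := huniq p 0 1 (by decide) L hL M hM hpL hpM 2
    have h0u := huniq p 0 1 (by decide) L hL M hM hpL hpM 0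
    have h1u := huniq p 0 1 (by decide) L hL M hM hpL hpM 1
    have h2u := huniq p 0 1 (by decide) L hL M hM hpL hpM 2
    have hLM : L ≠ M := net_ne_of_classes hA (by decide) hL hM
    have hLN : L ≠ N := net_ne_of_classes hA (by decide : (0:Fin 3) ≠ 2) hL hN2
    have hMN : M ≠ N := net_ne_of_classes hA (by decide : (1:Fin 3) ≠ 2) hM hN2
    have hset : linesThrough A p = {L, M, N} := by
      apply Finset.Subset.antisymm
      · intro K hK
        simp only [linesThrough, Finset.mem_filter] at hK
        obtain ⟨hKA, hpK⟩ := hK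
        obtain ⟨mK, hmK⟩ := hA.2.2.2.2.2.1 K hKA
        simp only [Finset.mem_insert, Finset.mem_singleton]
        have h3 : mK = 0 ∨ mK = 1 ∨ mK = 2 := by omega
        rcases h3 with rfl | rfl | rfl
        · exact Or.inl (h0u.unique ⟨hmK, hpK⟩ ⟨hL, hpL⟩)
        · exact Or.inr (Or.inl (h1u.unique ⟨hmK, hpK⟩ ⟨hM, hpM⟩))
        · exact Or.inr (Or.inr (h2u.unique ⟨hmK, hpK⟩ ⟨hN2, hpN⟩))
      · intro K hK
        simp only [Finset.mem_insert, Finset.mem_singleton] at hK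
        simp only [linesThrough, Finset.mem_filter]
        rcases hK with rfl | rfl | rfl
        · exact ⟨hA.2.2.2.2.1 0 hL, hpL⟩
        · exact ⟨hA.2.2.2.2.1 1 hM, hpM⟩
        · exact ⟨hA.2.2.2.2.1 2 hN2, hpN⟩
    rw [mult, hset]
    rw [Finset.card_insert_of_notMem (by simp [hLM, hLN]),
      Finset.card_insert_of_notMem (by simp [hMN]), Finset.card_singleton]
  -- vertices of concurrent classes have multiplicity 3
  have hmultvert : ∀ i, (∃ p : ProjPlane, ∀ L ∈ C i, p ∈ L) → mult A (vert i) = 3 := by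
    intro i hi
    have hv := hvertp i hi
    obtain ⟨L1, L2, hL1, hL2, h12⟩ := net_two_lines hA i
    have hset : linesThrough A (vert i) = C i := by
      apply Finset.Subset.antisymm
      · intro K hK
        simp only [linesThrough, Finset.mem_filter] at hK
        exact class_only hA hL1 hL2 h12 (hv L1 hL1) (hv L2 hL2) hK.1 hK.2
      · intro K hK
        simp only [linesThrough, Finset.mem_filter]
        exact ⟨hA.2.2.2.2.1 i hK, hv K hK⟩
    rw [mult, hset, hA.2.2.1 i]
  -- classification of triple points
  have hclass : ∀ p : ProjPlane, mult A p = 3 →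
      (∃ L ∈ C 0, ∃ M ∈ C 1, p ∈ L ∧ p ∈ M) ∨
      (∃ i, (∃ q : ProjPlane, ∀ L ∈ C i, q ∈ L) ∧ p = vert i) := by
    intro p hmp
    rw [mult] at hmp
    obtain ⟨K1, hK1⟩ := Finset.card_pos.mp (by omega : 0 < (linesThrough A p).card)
    have hK1' := hK1
    simp only [linesThrough, Finset.mem_filter] at hK1'
    obtain ⟨m1, hm1⟩ := hA.2.2.2.2.2.1 K1 hK1'.1
    by_cases hall : ∀ K ∈ linesThrough A p, K ∈ C m1
    · right
      have heq : linesThrough A p = C m1 :=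
        Finset.eq_of_subset_of_card_le hall (by rw [hA.2.2.1 m1, hmp])
      have hpall : ∀ L ∈ C m1, p ∈ L := by
        intro L hL
        rw [← heq] at hL
        simp only [linesThrough, Finset.mem_filter] at hL
        exact hL.2
      have hconc : ∃ q : ProjPlane, ∀ L ∈ C m1, q ∈ L := ⟨p, hpall⟩
      refine ⟨m1, hconc, ?_⟩
      obtain ⟨L1, L2, hL1, hL2, h12⟩ := net_two_lines hA m1
      exact meet_unique (net_line hA hL1) (net_line hA hL2)
        (fun hh => h12 hh) (hpall L1 hL1) (hpall L2 hL2)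
        (hvertp m1 hconc L1 hL1) (hvertp m1 hconc L2 hL2) |>.symm ▸ rfl
    · left
      push_neg at hall
      obtain ⟨K2, hK2mem, hK2not⟩ := hall
      have hK2' := hK2mem
      simp only [linesThrough, Finset.mem_filter] at hK2'
      obtain ⟨m2, hm2⟩ := hA.2.2.2.2.2.1 K2 hK2'.1
      have hm12 : m1 ≠ m2 := fun hh => hK2not (hh ▸ hm2)
      obtain ⟨L, ⟨hL0, hpL⟩, -⟩ := huniq p m1 m2 hm12 K1 hm1 K2 hm2 hK1'.2 hK2'.2 0
      obtain ⟨M, ⟨hM1, hpM⟩, -⟩ := huniq p m1 m2 hm12 K1 hm1 K2 hm2 hK1'.2 hK2'.2 1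
      exact ⟨L, hL0, M, hM1, hpL, hpM⟩
  -- the finite sets
  set S2 : Finset (Fin 3) :=
    Finset.univ.filter (fun i => ∃ p : ProjPlane, ∀ L ∈ C i, p ∈ L) with hS2
  set G : Finset ProjPlane := (C 0 ×ˢ C 1).image (fun q => pt q.1 q.2) with hG
  set Vf : Finset ProjPlane := S2.image vert with hVf
  have hTeq : {p : ProjPlane | mult A p = 3} = ↑(G ∪ Vf) := by
    ext p
    simp only [Set.mem_setOf_eq, Finset.coe_union, Set.mem_union, Finset.mem_coe]
    constructor
    · intro hp
      rcases hclass p hp with ⟨L, hL, M, hM, hpL, hpM⟩ | ⟨i, hi, rfl⟩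
      · left
        have hLM := hpt L M hL hM
        have hpe : p = pt L M := meet_unique (net_line hA hL) (net_line hA hM)
          (net_ne_of_classes hA (by decide) hL hM) hpL hpM hLM.1 hLM.2
        rw [hG, Finset.mem_image]
        exact ⟨(L, M), Finset.mem_product.mpr ⟨hL, hM⟩, hpe.symm⟩
      · right
        rw [hVf, Finset.mem_image]
        exact ⟨i, Finset.mem_filter.mpr ⟨Finset.mem_univ i, hi⟩, rfl⟩
    · intro hp
      rcases hp with hp | hp
      · rw [hG, Finset.mem_image] at hp
        obtain ⟨⟨L, M⟩, hq, rfl⟩ := hp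
        rw [Finset.mem_product] at hq
        exact hmultgrid _ ⟨L, hq.1, M, hq.2, (hpt L M hq.1 hq.2).1, (hpt L M hq.1 hq.2).2⟩
      · rw [hVf, Finset.mem_image] at hp
        obtain ⟨i, hi, rfl⟩ := hp
        exact hmultvert i (Finset.mem_filter.mp hi).2
  have hinjG : Set.InjOn (fun q : Set ProjPlane × Set ProjPlane => pt q.1 q.2)
      ↑(C 0 ×ˢ C 1) := by
    intro q1 h1 q2 h2 heq
    have heq' : pt q1.1 q1.2 = pt q2.1 q2.2 := heq
    rw [Finset.mem_coe, Finset.mem_product] at h1 h2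
    have hp1 := hpt q1.1 q1.2 h1.1 h1.2
    have hp2 := hpt q2.1 q2.2 h2.1 h2.2
    rw [heq'] at hp1
    have hLeq : q1.1 = q2.1 := by
      obtain ⟨N, -, hNu⟩ := huniq (pt q2.1 q2.2) 0 1 (by decide) q2.1 h2.1 q2.2 h2.2
        hp2.1 hp2.2 0
      exact (hNu q1.1 ⟨h1.1, hp1.1⟩).trans (hNu q2.1 ⟨h2.1, hp2.1⟩).symm
    have hMeq : q1.2 = q2.2 := by
      obtain ⟨N, -, hNu⟩ := huniq (pt q2.1 q2.2) 0 1 (by decide) q2.1 h2.1 q2.2 h2.2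
        hp2.1 hp2.2 1
      exact (hNu q1.2 ⟨h1.2, hp1.2⟩).trans (hNu q2.2 ⟨h2.2, hp2.2⟩).symm
    exact Prod.ext hLeq hMeq
  have hGcard : G.card = 9 := by
    rw [hG, Finset.card_image_of_injOn hinjG, Finset.card_product, hA.2.2.1 0, hA.2.2.1 1]
  have hVcard : Vf.card = S2.card := by
    rw [hVf]
    apply Finset.card_image_of_injOn
    intro i hi j hj hij
    by_contra hne
    rw [Finset.mem_coe, Finset.mem_filter] at hi hj
    obtain ⟨L1, L2, hL1, hL2, h12⟩ := net_two_lines hA j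
    have hmem : vert i ∈ L1 := by rw [hij]; exact hvertp j hj.2 L1 hL1
    exact vertex_not_on_other hA (Ne.symm hne) (hvertp i hi.2) hL1 hmem
  have hdisjGV : Disjoint G Vf := by
    rw [Finset.disjoint_left]
    intro p hpG hpV
    rw [hG, Finset.mem_image] at hpG
    obtain ⟨⟨L, M⟩, hq, hpe⟩ := hpG
    rw [Finset.mem_product] at hq
    rw [hVf, Finset.mem_image] at hpV
    obtain ⟨i, hi, hve⟩ := hpV
    rw [Finset.mem_filter] at hi
    have hoL : vert i ∈ L := by rw [hve, ← hpe]; exact (hpt L M hq.1 hq.2).1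
    have hoM : vert i ∈ M := by rw [hve, ← hpe]; exact (hpt L M hq.1 hq.2).2
    by_cases hi0 : i = 0
    · subst hi0
      exact vertex_not_on_other hA (by decide : (1 : Fin 3) ≠ 0) (hvertp 0 hi.2) hq.2 hoM
    · exact vertex_not_on_other hA (fun hh => hi0 hh.symm) (hvertp i hi.2) hq.1 hoL
  have hcount : ({p : ProjPlane | mult A p = 3}).ncard = 9 + S2.card := by
    rw [hTeq, Set.ncard_coe_finset, Finset.card_union_of_disjoint hdisjGV, hGcard, hVcard]
  rw [hcount] at h11
  have ht2 : S2.card = 2 := by omega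
  obtain ⟨i, hi, j, hj, hij⟩ := Finset.one_lt_card.mp (by omega : 1 < S2.card)
  rw [hS2, Finset.mem_filter] at hi hj
  have hallc := hpart1 i j hij hi.2 hj.2
  have hS2univ : S2 = Finset.univ := by
    apply Finset.eq_univ_iff_forall.mpr
    intro k
    rw [hS2, Finset.mem_filter]
    exact ⟨Finset.mem_univ k, hallc k⟩
  rw [hS2univ] at ht2
  simp at ht2
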